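/- Distance-3k relevance for independent set discovery: Let G be a graph, S a set of k ≥ 1 token positions, and suppose I is an independent set of G of size k reachable from S. If some target vertex u ∈ I satisfies dist_G(s,u) > 3k for the token starting at s ∈ S assigned to u, then there exists a vertex v with dist_G(s,v) ≤ 3k such that (I \ {u}) ∪ {v} is also an independent set of size k. In particular, on a connected graph G with |V(G)| > (3k)·k, for every s ∈ S and every independent set I of size k containing a vertex at distance > 3k from s, a replacement at distance ≤ 3k exists. -/

import Mathlib

open SimpleGraph

lemma walk_split {V : Type} {G : SimpleGraph V} {a b : V} (p : G.Walk a b) :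
    ∀ i ≤ p.length, ∃ (q : G.Walk a (p.getVert i)) (r : G.Walk (p.getVert i) b),
      q.length = i ∧ r.length + i = p.length := by
  induction p with
  | nil =>
    intro i hi
    simp only [Walk.length_nil, Nat.le_zero] at hi
    subst hi
    exact ⟨Walk.nil, Walk.nil, rfl, rfl⟩
  | cons h q ih =>
    intro i hi
    cases i with
    | zero => exact ⟨Walk.nil, Walk.cons h q, rfl, rfl⟩
    | succ n =>
      obtain ⟨q', r', hq', hr'⟩ := ih n (by simpa using Nat.succ_le_succ_iff.mp (by simpa using hi))
      refine ⟨(Walk.cons h q').copy rfl (by simp [Walk.getVert_cons_succ]),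
        r'.copy (by simp [Walk.getVert_cons_succ]) rfl, ?_, ?_⟩
      · simp [hq']
      · simp [hr']; omega

/-- Distance-`3k` relevance for independent set discovery: on a connected graph with more
than `3k·k` vertices, if `I` is an independent set of size `k` containing a vertex `u` at
distance more than `3k` from `s`, then `u` can be replaced by some vertex `v` at distance
at most `3k` from `s`, preserving independence and cardinality. -/
theorem independentSet_replacement_within_distance {V : Type} [Fintype V] [DecidableEq V]
    (G : SimpleGraph V) (hG : G.Connected) (k : ℕ) (hk : 1 ≤ k)
    (hV : 3 * k * k < Fintype.card V)
    (s : V) (I : Finset V)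
    (hind : ∀ a ∈ I, ∀ b ∈ I, ¬ G.Adj a b) (hcard : I.card = k)
    (u : V) (hu : u ∈ I) (hdist : 3 * k < G.dist s u) :
    ∃ v : V, G.dist s v ≤ 3 * k ∧
      (∀ a ∈ insert v (I.erase u), ∀ b ∈ insert v (I.erase u), ¬ G.Adj a b) ∧
      (insert v (I.erase u)).card = k := by
  classical
  set d : V → ℕ := fun w => G.dist s w with hd
  have herase : (I.erase u).card = k - 1 := by rw [Finset.card_erase_of_mem hu, hcard]
  set B : Finset ℕ := (I.erase u).biUnion (fun w => {d w - 1, d w, d w + 1}) with hB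
  have hBcard : B.card ≤ 3 * (k - 1) := by
    refine le_trans Finset.card_biUnion_le ?_
    refine le_trans (Finset.sum_le_card_nsmul _ _ 3 ?_) (by simp [herase]; ring_nf; omega)
    intro w _
    exact le_trans (Finset.card_insert_le _ _)
      (Nat.succ_le_succ (le_trans (Finset.card_insert_le _ _) (by simp)))
  have hex : ∃ i ∈ Finset.range (3 * k + 1), i ∉ B := by
    by_contra h
    push_neg at h
    have := Finset.card_le_card h
    simp only [Finset.card_range] at this
    omega
  obtain ⟨i, hi, hiB⟩ := hex
  have hik : i ≤ 3 * k := Nat.lt_succ_iff.mp (Finset.mem_range.mp hi)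
  obtain ⟨p, hp⟩ := (hG s u).exists_walk_length_eq_dist
  set v := p.getVert i with hv
  obtain ⟨q, r, hq, hr⟩ := walk_split p i (by omega)
  have hdv1 : G.dist s v ≤ i := hq ▸ SimpleGraph.dist_le q
  have hdv2 : G.dist v u ≤ p.length - i := by
    have h := SimpleGraph.dist_le r
    have he : G.dist v u = G.dist (p.getVert i) u := rfl
    omega
  have hdv : G.dist s v = i := by
    have htri := hG.dist_triangle (u := s) (v := v) (w := u)
    omega
  have hgood : ∀ w ∈ I.erase u, v ≠ w ∧ ¬ G.Adj v w := by
    intro w hw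
    have hwB : i ∉ ({d w - 1, d w, d w + 1} : Finset ℕ) :=
      fun h => hiB (Finset.mem_biUnion.mpr ⟨w, hw, h⟩)
    simp only [Finset.mem_insert, Finset.mem_singleton, not_or] at hwB
    constructor
    · rintro rfl
      exact hwB.2.1 hdv.symm
    · intro hadj
      have hd1 : G.dist v w ≤ 1 := by
        have := SimpleGraph.dist_le hadj.toWalk; simpa using this
      have hd2 : G.dist w v ≤ 1 := by
        have := SimpleGraph.dist_le hadj.symm.toWalk; simpa using this
      have h1 : G.dist s w ≤ G.dist s v + G.dist v w := hG.dist_triangle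
      have h2 : G.dist s v ≤ G.dist s w + G.dist w v := hG.dist_triangle
      have hdw : d w = G.dist s w := rfl
      omega
  have hvnot : v ∉ I.erase u := fun h => (hgood v h).1 rfl
  refine ⟨v, by omega, ?_, ?_⟩
  · intro a ha b hb
    rcases Finset.mem_insert.mp ha with rfl | ha' <;>
      rcases Finset.mem_insert.mp hb with rfl | hb'
    · exact fun h => G.loopless.irrefl _ h
    · exact (hgood b hb').2
    · exact fun h => (hgood a ha').2 h.symm
    · exact hind a (Finset.mem_of_mem_erase ha') b (Finset.mem_of_mem_erase hb')
  · rw [Finset.card_insert_of_notMem hvnot, herase]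
    omega
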